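/- Let 𝒜 = 𝔽₂ⁿ (n ≥ 1) be equipped with a symmetric nondegenerate 𝔽₂-bilinear form ω, let L ⊆ 𝒜 be a subspace, let E₁,…,Eₙ be positive real numbers, and let β > 0. Define the energy functional E(B) = Σᵢ Eᵢ·χ(ω(B,êᵢ)), where êᵢ are the standard basis vectors and χ(x) = 1 if x = 1 and 0 if x = 0. Then Σ_{B ∈ L^{⊥ω}} exp(−β·E(B)) = (1/|L|) · (∏ᵢ (1 + exp(−β·Eᵢ))) · Σ_{A ∈ L} ∏_{i : Aᵢ = 1} tanh(β·Eᵢ/2). (Generalized Wegner duality, Theorem 1 of the paper: the thermal partition function of the perpendicular-complement model equals the full partition function times a dual partition function at dual inverse temperature β′ = −ln tanh(β/2).) -/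

import Mathlib

open Finset

/-- Hamming-type support of a binary vector. -/
def supp {n : ℕ} (v : Fin n → ZMod 2) : Finset (Fin n) :=
  Finset.univ.filter (fun i => v i = 1)

namespace WegnerAux

/-- The sign character on `ZMod 2`. -/
noncomputable def eps (x : ZMod 2) : ℝ := if x = 1 then -1 else 1

lemma eps_zero : eps 0 = 1 := by simp [eps]

lemma eps_one : eps 1 = -1 := by simp [eps]

lemma zmod2_cases (x : ZMod 2) : x = 0 ∨ x = 1 := by revert x; decide

lemma eps_add (x y : ZMod 2) : eps (x + y) = eps x * eps y := by
  have h11 : (1 : ZMod 2) + 1 = 0 := by decide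
  rcases zmod2_cases x with h | h <;> rcases zmod2_cases y with h' | h' <;>
      subst h <;> subst h' <;>
    simp only [add_zero, zero_add, h11, eps_zero, eps_one, mul_one, one_mul] <;> norm_num

lemma eps_sum {ι : Type*} (s : Finset ι) (f : ι → ZMod 2) :
    eps (∑ i ∈ s, f i) = ∏ i ∈ s, eps (f i) := by
  classical
  induction s using Finset.cons_induction with
  | empty => simp [eps]
  | cons a s ha ih => rw [Finset.sum_cons, Finset.prod_cons, eps_add, ih]

lemma tanh_half (t : ℝ) :
    1 - Real.exp (-t) = (1 + Real.exp (-t)) * Real.tanh (t / 2) := by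
  rw [Real.tanh_eq_sinh_div_cosh, Real.sinh_eq, Real.cosh_eq]
  have he : Real.exp (-(t / 2)) = Real.exp (-t / 2) := by rw [neg_div]
  rw [he]
  have h1 : Real.exp (t / 2) * Real.exp (-t / 2) = 1 := by
    rw [← Real.exp_add, show t / 2 + -t / 2 = 0 by ring, Real.exp_zero]
  have h2 : Real.exp (-t / 2) * Real.exp (-t / 2) = Real.exp (-t) := by
    rw [← Real.exp_add]; congr 1; ring
  have hpos : 0 < Real.exp (t / 2) + Real.exp (-t / 2) := by positivity
  field_simp
  linear_combination (2 * Real.exp (t / 2)) * h2 - (2 * Real.exp (-t / 2)) * h1 + 2 * he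

end WegnerAux

open WegnerAux in
set_option maxHeartbeats 1000000 in
open scoped Classical in
/-- **Generalized Wegner duality** (Theorem 1):
the thermal partition function of the perpendicular-complement model `L^{⊥ω}`
equals the full partition function times the dual partition function over `L`,
with dual weights `tanh (β Eᵢ / 2)`. -/
theorem generalized_wegner_duality {n : ℕ} (hn : 1 ≤ n)
    (ω : LinearMap.BilinForm (ZMod 2) (Fin n → ZMod 2))
    (hsymm : ∀ A B, ω A B = ω B A)
    (hnondeg : ∀ A, (∀ B, ω A B = 0) → A = 0)
    (L : Submodule (ZMod 2) (Fin n → ZMod 2))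
    (E : Fin n → ℝ) (hE : ∀ i, 0 < E i) (β : ℝ) (hβ : 0 < β) :
    ∑ B ∈ Finset.univ.filter (fun B => ∀ A ∈ L, ω A B = 0),
        Real.exp (-β * ∑ i, E i * ((ω B (Pi.single i 1)).val : ℝ))
      = (1 / (Nat.card L : ℝ)) * (∏ i, (1 + Real.exp (-β * E i))) *
          ∑ A ∈ Finset.univ.filter (fun A => A ∈ L),
            ∏ i ∈ supp A, Real.tanh (β * E i / 2) := by
  classical
  set F : Finset (Fin n → ZMod 2) := Finset.univ.filter (fun A => A ∈ L) with hF
  set f : (Fin n → ZMod 2) → ℝ :=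
    fun B => Real.exp (-β * ∑ i, E i * ((ω B (Pi.single i 1)).val : ℝ)) with hf
  have hmemF : ∀ A, A ∈ F ↔ A ∈ L := by intro A; simp [hF]
  have h0F : (0 : Fin n → ZMod 2) ∈ F := (hmemF 0).mpr L.zero_mem
  have hFcard : (0 : ℝ) < (F.card : ℝ) := by
    have : 0 < F.card := Finset.card_pos.mpr ⟨0, h0F⟩
    exact_mod_cast this
  -- cardinality of L
  have hcard : (Nat.card L : ℝ) = (F.card : ℝ) := by
    have : Nat.card L = F.card := by
      rw [Nat.card_eq_fintype_card, hF, Fintype.card_subtype]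
    exact_mod_cast this
  -- decomposition of the bilinear form along coordinates
  have hrepr : ∀ (w v : Fin n → ZMod 2), ω w v = ∑ i, v i * ω w (Pi.single i 1) := by
    intro w v
    conv_lhs => rw [← Finset.univ_sum_single v]
    rw [map_sum]
    refine Finset.sum_congr rfl fun i _ => ?_
    rcases zmod2_cases (v i) with h | h <;> rw [h]
    · rw [Pi.single_zero, map_zero, zero_mul]
    · rw [one_mul]
  -- the coordinate map B ↦ (ω B êᵢ)ᵢ is bijective
  have hinj : Function.Injective
      (fun B : Fin n → ZMod 2 => fun i => ω B (Pi.single i 1)) := by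
    intro a b hab
    have hzero : ∀ i, ω (a - b) (Pi.single i (1 : ZMod 2)) = 0 := by
      intro i
      have h' : ω a (Pi.single i (1 : ZMod 2)) = ω b (Pi.single i 1) := congrFun hab i
      rw [map_sub, LinearMap.sub_apply, h', sub_self]
    have : a - b = 0 := by
      refine hnondeg _ fun C => ?_
      rw [hrepr (a - b) C]
      exact Finset.sum_eq_zero fun i _ => by rw [hzero i, mul_zero]
    exact sub_eq_zero.mp this
  have hbij : Function.Bijective
      (fun B : Fin n → ZMod 2 => fun i => ω B (Pi.single i 1)) :=
    Finite.injective_iff_bijective.mp hinj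
  -- character orthogonality
  have hchar : ∀ B : Fin n → ZMod 2, ∑ A ∈ F, eps (ω A B) =
      if (∀ A ∈ L, ω A B = 0) then (F.card : ℝ) else 0 := by
    intro B
    by_cases h : ∀ A ∈ L, ω A B = 0
    · rw [if_pos h]
      rw [Finset.sum_congr rfl fun A hA => by rw [h A ((hmemF A).mp hA), eps_zero]]
      simp
    · rw [if_neg h]
      push_neg at h
      obtain ⟨A₀, hA₀L, hA₀⟩ := h
      have hA₀1 : ω A₀ B = 1 := (zmod2_cases _).resolve_left hA₀
      have hself : ∀ v : Fin n → ZMod 2, v + v = 0 := by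
        intro v; funext i
        have : ∀ z : ZMod 2, z + z = 0 := by decide
        exact this _
      have key : ∑ A ∈ F, eps (ω (A + A₀) B) = ∑ A ∈ F, eps (ω A B) := by
        refine Finset.sum_equiv (Equiv.addRight A₀) (fun A => ?_) (fun A _ => rfl)
        simp only [hmemF, Equiv.coe_addRight]
        constructor
        · intro hA; exact L.add_mem hA hA₀L
        · intro hA
          have := L.add_mem hA hA₀L
          rwa [add_assoc, hself, add_zero] at this
      have key2 : ∑ A ∈ F, eps (ω (A + A₀) B) = -∑ A ∈ F, eps (ω A B) := by
        rw [← Finset.sum_neg_distrib]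
        refine Finset.sum_congr rfl fun A _ => ?_
        rw [map_add, LinearMap.add_apply, eps_add, hA₀1, eps_one]
        ring
      have := key.symm.trans key2
      linarith
  -- the per-A factorized sum
  have stepB : ∀ A : Fin n → ZMod 2,
      (∑ B : Fin n → ZMod 2, eps (ω A B) * f B)
        = (∏ i, (1 + Real.exp (-β * E i))) *
            ∏ i ∈ supp A, Real.tanh (β * E i / 2) := by
    intro A
    set h : Fin n → ZMod 2 → ℝ :=
      fun i x => eps (A i * x) * Real.exp (-(β * (E i * (x.val : ℝ)))) with hh
    have step1 : (∑ B : Fin n → ZMod 2, eps (ω A B) * f B)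
        = ∑ C : Fin n → ZMod 2, ∏ i, h i (C i) := by
      refine Fintype.sum_bijective _ hbij _ _ fun B => ?_
      have e1 : ω A B = ∑ i, A i * ω B (Pi.single i 1) := by
        rw [hsymm A B, hrepr B A]
      have e2 : f B = ∏ i, Real.exp (-(β * (E i * ((ω B (Pi.single i 1)).val : ℝ)))) := by
        show Real.exp (-β * ∑ i, E i * ((ω B (Pi.single i 1)).val : ℝ)) = _
        rw [show -β * ∑ i, E i * ((ω B (Pi.single i 1)).val : ℝ)
              = ∑ i, -(β * (E i * ((ω B (Pi.single i 1)).val : ℝ))) from by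
            rw [Finset.mul_sum]; exact Finset.sum_congr rfl fun i _ => by ring]
        exact Real.exp_sum _ _
      rw [e1, e2, eps_sum, ← Finset.prod_mul_distrib]
    have step2 : (∑ C : Fin n → ZMod 2, ∏ i, h i (C i)) = ∏ i, ∑ x : ZMod 2, h i x :=
      (Fintype.prod_sum h).symm
    have step3 : ∀ i, (∑ x : ZMod 2, h i x)
        = (1 + Real.exp (-β * E i)) *
            (if A i = 1 then Real.tanh (β * E i / 2) else 1) := by
      intro i
      have huniv : (Finset.univ : Finset (ZMod 2)) = {0, 1} := by decide
      rw [huniv, Finset.sum_pair (by decide : (0 : ZMod 2) ≠ 1)]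
      have hv0 : (((0 : ZMod 2)).val : ℝ) = 0 := by norm_num [ZMod.val_zero]
      have hv1 : (((1 : ZMod 2)).val : ℝ) = 1 := by
    -- `ZMod.val_one` needs `1 < n`
        norm_num [ZMod.val_one]
      have hexp : -(β * (E i * (1 : ℝ))) = -β * E i := by ring
      rcases zmod2_cases (A i) with hAi | hAi <;>
        simp only [hh, hAi, zero_mul, one_mul, mul_zero, mul_one, eps_zero, eps_one,
          hv0, hv1, hexp, Real.exp_zero]
      · norm_num
      · rw [show (if True then Real.tanh (β * E i / 2) else 1)
              = Real.tanh (β * E i / 2) from if_pos trivial,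
            show (-0 : ℝ) = 0 by ring, Real.exp_zero,
            show -(β * E i) = -β * E i by ring]
        have := tanh_half (β * E i)
        rw [show -(β * E i) = -β * E i by ring] at this
        linarith
    calc (∑ B : Fin n → ZMod 2, eps (ω A B) * f B)
        = ∏ i, ((1 + Real.exp (-β * E i)) *
            (if A i = 1 then Real.tanh (β * E i / 2) else 1)) := by
          rw [step1, step2]; exact Finset.prod_congr rfl fun i _ => step3 i
      _ = (∏ i, (1 + Real.exp (-β * E i))) *
            ∏ i, (if A i = 1 then Real.tanh (β * E i / 2) else 1) :=
          Finset.prod_mul_distrib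
      _ = _ := by
          rw [supp, ← Finset.prod_filter]
  -- assemble
  calc ∑ B ∈ Finset.univ.filter (fun B => ∀ A ∈ L, ω A B = 0), f B
      = ∑ B : Fin n → ZMod 2, if (∀ A ∈ L, ω A B = 0) then f B else 0 :=
        Finset.sum_filter _ _
    _ = ∑ B : Fin n → ZMod 2, (1 / (F.card : ℝ)) * ((∑ A ∈ F, eps (ω A B)) * f B) := by
        refine Finset.sum_congr rfl fun B _ => ?_
        rw [hchar B]
        by_cases hB : ∀ A ∈ L, ω A B = 0
        · rw [if_pos hB, if_pos hB]
          rw [← mul_assoc, one_div, inv_mul_cancel₀ hFcard.ne', one_mul]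
        · rw [if_neg hB, if_neg hB]
          ring
    _ = (1 / (F.card : ℝ)) * ∑ A ∈ F, ∑ B : Fin n → ZMod 2, eps (ω A B) * f B := by
        rw [← Finset.mul_sum]
        congr 1
        rw [Finset.sum_comm]
        exact Finset.sum_congr rfl fun B _ => Finset.sum_mul _ _ _
    _ = (1 / (F.card : ℝ)) * ∑ A ∈ F, (∏ i, (1 + Real.exp (-β * E i))) *
            ∏ i ∈ supp A, Real.tanh (β * E i / 2) := by
        rw [Finset.sum_congr rfl fun A _ => stepB A]
    _ = _ := by
        rw [hcard, ← Finset.mul_sum]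
        ring
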